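/- Let q(x|θ) be as in the exponential family setup with support the positive orthant ℝ₊^m. The non-negative Hyvärinen scoring rule S₊(x, Q_θ) = Σ_{j=1}^m [2x_j ∂_j log q(x) + x_j² ∂²_{jj} log q(x) + (1/2)x_j² (∂_j log q(x))²] is a quadratic function of θ of the form (1/2)θᵀΓ₊(x)θ + g₊(x)ᵀθ + c₊(x), where Γ₊(x) = Σ_{j=1}^m x_j² h_j(x)h_j(x)ᵀ with h_j(x) = ∂t(x)/∂x_j; in particular Γ₊(x) is positive semidefinite. -/

import Mathlib

open Matrix

/-- Partial derivative of `f` in the `j`-th coordinate at `x`. -/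
noncomputable def pderiv' {m : ℕ} (f : (Fin m → ℝ) → ℝ) (j : Fin m) (x : Fin m → ℝ) : ℝ :=
  deriv (fun s => f (Function.update x j s)) (x j)

lemma pderiv'_pderiv' {m : ℕ} (f : (Fin m → ℝ) → ℝ) (j : Fin m) (x : Fin m → ℝ) :
    pderiv' (fun y => pderiv' f j y) j x
      = deriv (deriv (fun s => f (Function.update x j s))) (x j) := by
  unfold pderiv'
  congr 1
  funext s
  simp [Function.update_idem]

lemma quad_form_sum {s m : ℕ} (c : Fin m → ℝ) (w : Fin m → Fin s → ℝ) (θ : Fin s → ℝ) :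
    θ ⬝ᵥ (∑ j, c j • Matrix.vecMulVec (w j) (w j)).mulVec θ
      = ∑ j, c j * (∑ a, θ a * w j a)^2 := by
  have key : ∀ j : Fin m, θ ⬝ᵥ (c j • Matrix.vecMulVec (w j) (w j)).mulVec θ
      = c j * (∑ a, θ a * w j a)^2 := by
    intro j
    simp only [Matrix.mulVec, dotProduct, Matrix.smul_apply, Matrix.vecMulVec_apply,
      smul_eq_mul, pow_two, Finset.mul_sum, Finset.sum_mul]
    refine Finset.sum_congr rfl fun a _ => ?_
    refine Finset.sum_congr rfl fun k _ => ?_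
    ring
  calc θ ⬝ᵥ (∑ j, c j • Matrix.vecMulVec (w j) (w j)).mulVec θ
      = ∑ j, θ ⬝ᵥ (c j • Matrix.vecMulVec (w j) (w j)).mulVec θ := by
        induction (Finset.univ : Finset (Fin m)) using Finset.induction with
        | empty => simp [Matrix.mulVec, dotProduct]
        | insert _ _ hj ih => simp [Finset.sum_insert hj, Matrix.add_mulVec, dotProduct_add, ih]
    _ = ∑ j, c j * (∑ a, θ a * w j a)^2 := Finset.sum_congr rfl fun j _ => key j

/-- The non-negative Hyvärinen scoring rule of an exponential family on the positive
orthant is quadratic in the natural parameter, with quadratic part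
`Γ₊(x) = ∑ j, x_j² h_j(x) h_j(x)ᵀ`, which is positive semidefinite. -/
theorem stmt_1 {m s : ℕ}
    (t : (Fin m → ℝ) → Fin s → ℝ) (b : (Fin m → ℝ) → ℝ) (ψ : (Fin s → ℝ) → ℝ)
    (ht : ∀ a, ContDiffOn ℝ 2 (fun y => t y a) {y : Fin m → ℝ | ∀ j, 0 < y j})
    (hb : ContDiffOn ℝ 2 b {y : Fin m → ℝ | ∀ j, 0 < y j})
    (logq : (Fin s → ℝ) → (Fin m → ℝ) → ℝ)
    (hlogq : ∀ θ y, logq θ y = (∑ a, θ a * t y a) - ψ θ + b y)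
    (x : Fin m → ℝ) (hx : ∀ j, 0 < x j)
    (h : Fin m → Fin s → ℝ)
    (hh : ∀ j a, h j a = pderiv' (fun y => t y a) j x)
    (Γ : Matrix (Fin s) (Fin s) ℝ)
    (hΓ : Γ = ∑ j, (x j)^2 • Matrix.vecMulVec (h j) (h j)) :
    (∃ (g : Fin s → ℝ) (c : ℝ), ∀ θ : Fin s → ℝ,
      (∑ j, (2 * x j * pderiv' (logq θ) j x
          + (x j)^2 * pderiv' (fun y => pderiv' (logq θ) j y) j x
          + (1/2) * (x j)^2 * (pderiv' (logq θ) j x)^2))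
        = (1/2) * (θ ⬝ᵥ Γ.mulVec θ) + g ⬝ᵥ θ + c)
    ∧ Γ.PosSemidef := by
  classical
  set U : Set (Fin m → ℝ) := {y | ∀ j, 0 < y j} with hUdef
  have hUopen : IsOpen U := by
    have : U = Set.pi Set.univ (fun _ : Fin m => Set.Ioi (0:ℝ)) := by
      ext y; simp [Set.mem_pi, hUdef]
    rw [this]
    exact isOpen_set_pi Set.finite_univ (fun _ _ => isOpen_Ioi)
  -- the affine line maps
  have hL : ∀ j : Fin m, ContDiff ℝ 2 (fun s : ℝ => Function.update x j s) := by
    intro j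
    apply contDiff_pi.mpr
    intro i
    by_cases hij : i = j
    · subst hij
      simp only [Function.update_self]
      exact contDiff_id
    · simp only [Function.update_of_ne hij]
      exact contDiff_const
  -- open neighbourhoods on the line
  set V : Fin m → Set ℝ := fun j => (fun s : ℝ => Function.update x j s) ⁻¹' U with hVdef
  have hVopen : ∀ j, IsOpen (V j) := fun j =>
    hUopen.preimage (hL j).continuous
  have hxV : ∀ j, x j ∈ V j := by
    intro j
    show Function.update x j (x j) ∈ U
    rw [Function.update_eq_self]
    exact hx
  -- one-variable restrictions
  set φ : Fin m → Fin s → ℝ → ℝ := fun j a s => t (Function.update x j s) a with hφdef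
  set β : Fin m → ℝ → ℝ := fun j s => b (Function.update x j s) with hβdef
  have hφC : ∀ j a, ContDiffOn ℝ 2 (φ j a) (V j) := fun j a =>
    (ht a).comp (hL j).contDiffOn (Set.Subset.refl _)
  have hβC : ∀ j, ContDiffOn ℝ 2 (β j) (V j) := fun j =>
    hb.comp (hL j).contDiffOn (Set.Subset.refl _)
  -- differentiability facts
  have hdiff : ∀ (f : ℝ → ℝ) (j : Fin m), ContDiffOn ℝ 2 f (V j) →
      (∀ z ∈ V j, DifferentiableAt ℝ f z) ∧ DifferentiableAt ℝ (deriv f) (x j) := by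
    intro f j hf
    constructor
    · intro z hz
      exact (hf.differentiableOn (by norm_num)).differentiableAt ((hVopen j).mem_nhds hz)
    · have h1 : ContDiffOn ℝ 1 (deriv f) (V j) :=
        hf.deriv_of_isOpen (hVopen j) (by norm_num)
      exact (h1.differentiableOn (by norm_num)).differentiableAt
        ((hVopen j).mem_nhds (hxV j))
  -- coefficients
  set p : Fin m → ℝ := fun j => deriv (β j) (x j) with hpdef
  set q : Fin m → ℝ := fun j => deriv (deriv (β j)) (x j) with hqdef
  set v : Fin m → Fin s → ℝ := fun j a => deriv (deriv (φ j a)) (x j) with hvdef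
  have hhφ : ∀ j a, h j a = deriv (φ j a) (x j) := by
    intro j a; rw [hh]; rfl
  -- the one-variable restriction of logq
  have hlog_line : ∀ θ j, (fun s => logq θ (Function.update x j s))
      = fun s => (∑ a, θ a * φ j a s) - ψ θ + β j s := by
    intro θ j; funext s; rw [hlogq]
  -- first derivative at any point of V j
  have key_deriv : ∀ θ (j : Fin m), ∀ z ∈ V j,
      HasDerivAt (fun s => logq θ (Function.update x j s))
        ((∑ a, θ a * deriv (φ j a) z) + deriv (β j) z) z := by
    intro θ j z hz
    rw [hlog_line]
    have hφd : ∀ a, HasDerivAt (φ j a) (deriv (φ j a) z) z :=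
      fun a => (((hdiff _ j (hφC j a)).1) z hz).hasDerivAt
    have hβd : HasDerivAt (β j) (deriv (β j) z) z :=
      (((hdiff _ j (hβC j)).1) z hz).hasDerivAt
    have hsum : HasDerivAt (fun s => ∑ a, θ a * φ j a s)
        (∑ a, θ a * deriv (φ j a) z) z := by
      apply HasDerivAt.fun_sum
      intro a _
      exact (hφd a).const_mul (θ a)
    exact (hsum.sub_const (ψ θ)).add hβd
  have key1 : ∀ θ (j : Fin m), pderiv' (logq θ) j x = (∑ a, θ a * h j a) + p j := by
    intro θ j
    have := (key_deriv θ j (x j) (hxV j)).deriv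
    unfold pderiv'
    rw [this, hpdef]
    congr 1
    exact Finset.sum_congr rfl fun a _ => by rw [hhφ]
  -- second derivative
  have key2 : ∀ θ (j : Fin m), pderiv' (fun y => pderiv' (logq θ) j y) j x
      = (∑ a, θ a * v j a) + q j := by
    intro θ j
    rw [pderiv'_pderiv']
    have heq : (deriv (fun s => logq θ (Function.update x j s)))
        =ᶠ[nhds (x j)] (fun z => (∑ a, θ a * deriv (φ j a) z) + deriv (β j) z) := by
      filter_upwards [(hVopen j).mem_nhds (hxV j)] with z hz
      exact (key_deriv θ j z hz).deriv
    rw [heq.deriv_eq]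
    have hφd2 : ∀ a, HasDerivAt (deriv (φ j a)) (v j a) (x j) :=
      fun a => ((hdiff _ j (hφC j a)).2).hasDerivAt
    have hβd2 : HasDerivAt (deriv (β j)) (q j) (x j) :=
      ((hdiff _ j (hβC j)).2).hasDerivAt
    have hsum : HasDerivAt (fun z => ∑ a, θ a * deriv (φ j a) z)
        (∑ a, θ a * v j a) (x j) := by
      apply HasDerivAt.fun_sum
      intro a _
      exact (hφd2 a).const_mul (θ a)
    exact (hsum.add hβd2).deriv
  -- quadratic form value
  have hquad : ∀ θ : Fin s → ℝ, θ ⬝ᵥ Γ.mulVec θ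
      = ∑ j, (x j)^2 * (∑ a, θ a * h j a)^2 := by
    intro θ
    rw [hΓ]
    exact quad_form_sum _ _ θ
  constructor
  · refine ⟨fun a => ∑ j, (2 * x j * h j a + (x j)^2 * v j a + (x j)^2 * p j * h j a),
      ∑ j, (2 * x j * p j + (x j)^2 * q j + (1/2) * (x j)^2 * (p j)^2), fun θ => ?_⟩
    have hg : (fun a => ∑ j, (2 * x j * h j a + (x j)^2 * v j a + (x j)^2 * p j * h j a)) ⬝ᵥ θ
        = ∑ j, (2 * x j * (∑ a, θ a * h j a) + (x j)^2 * (∑ a, θ a * v j a)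
            + (x j)^2 * p j * (∑ a, θ a * h j a)) := by
      simp only [dotProduct, Finset.sum_mul]
      rw [Finset.sum_comm]
      refine Finset.sum_congr rfl fun j _ => ?_
      simp only [Finset.mul_sum, add_mul, Finset.sum_add_distrib]
      congr 1
      · congr 1
        · exact Finset.sum_congr rfl fun a _ => by ring
        · exact Finset.sum_congr rfl fun a _ => by ring
      · exact Finset.sum_congr rfl fun a _ => by ring
    rw [hquad θ, hg, Finset.mul_sum, ← Finset.sum_add_distrib, ← Finset.sum_add_distrib]
    simp only [key1, key2]
    refine Finset.sum_congr rfl fun j _ => ?_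
    ring
  · refine Matrix.PosSemidef.of_dotProduct_mulVec_nonneg ?_ ?_
    · show Γᴴ = Γ
      ext i k
      simp only [hΓ, Matrix.conjTranspose_apply, Matrix.sum_apply, Matrix.smul_apply,
        Matrix.vecMulVec_apply, smul_eq_mul, star_trivial]
      exact Finset.sum_congr rfl fun j _ => by ring
    · intro θ
      have : star θ = θ := by
        funext a; simp
      rw [this, hquad θ]
      apply Finset.sum_nonneg
      intro j _
      positivity
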